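/- In the sequential scheduling game on m unrelated machines where players have k-lookahead (k ≥ 1), every k-lookahead play of all n jobs starting from zero initial loads has makespan at most (m + n·2^k)·OPT; in particular the sequential price of anarchy is O(n·2^k). Combined with the bound (m·k·2^k + m)·OPT, the sequential price of anarchy is O(2^k · min{mk, n}). -/

import Mathlib

/-!
Sequential scheduling game on `m` unrelated machines with `k`-lookahead players.
Machines are indexed by `Fin m`, jobs by natural numbers (a block `[a:b]` of jobs plays
in the order `a, a+1, …, b`), and `p i j` is the processing time of job `j` on machine `i`.
-/

/-- Add the processing time of job `j` on machine `i` to the load vector `D`. -/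
def bump {m : ℕ} (p : Fin m → ℕ → ℝ) (D : Fin m → ℝ) (i : Fin m) (j : ℕ) : Fin m → ℝ :=
  fun i' => D i' + if i' = i then p i j else 0

/-- `Out p D js F`: `F` is the final load vector of some backward-induction
(subgame-perfect, ties broken arbitrarily) play of the finite extensive game in which
the jobs in `js` choose machines in order, starting from loads `D`; the payoff of each
job is the load, after all of these moves, of the machine it chose. -/
inductive Out {m : ℕ} (p : Fin m → ℕ → ℝ) : (Fin m → ℝ) → List ℕ → (Fin m → ℝ) → Prop
  | nil (D : Fin m → ℝ) : Out p D [] D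
  | cons (D : Fin m → ℝ) (j : ℕ) (js : List ℕ) (i : Fin m) (cont : Fin m → Fin m → ℝ)
      (hcont : ∀ i', Out p (bump p D i' j) js (cont i'))
      (hopt : ∀ i', cont i i ≤ cont i' i') :
      Out p D (j :: js) (cont i)

/-- `i` is an optimal root move, for the root job `j` followed by the jobs `js`,
of the lookahead game starting from loads `D`, solved by backward induction
(ties broken arbitrarily). -/
def RootMove {m : ℕ} (p : Fin m → ℕ → ℝ) (D : Fin m → ℝ) (j : ℕ) (js : List ℕ)
    (i : Fin m) : Prop :=
  ∃ cont : Fin m → Fin m → ℝ,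
    (∀ i', Out p (bump p D i' j) js (cont i')) ∧ (∀ i', cont i i ≤ cont i' i')

/-- `Play p k D a b F`: starting from initial loads `D`, the block `[a:b]` of jobs plays a
`k`-lookahead play resulting in final loads `F`: the first remaining job `a` makes an
optimal root move of the lookahead game on jobs `a, a+1, …, min (a+k) b`, its processing
time is added to the chosen machine, and the remaining jobs continue. -/
inductive Play {m : ℕ} (p : Fin m → ℕ → ℝ) (k : ℕ) :
    (Fin m → ℝ) → ℕ → ℕ → (Fin m → ℝ) → Prop
  | nil (D : Fin m → ℝ) (a b : ℕ) (h : b < a) : Play p k D a b D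
  | cons (D : Fin m → ℝ) (a b : ℕ) (i : Fin m) (F : Fin m → ℝ) (hab : a ≤ b)
      (hroot : RootMove p D a (List.range' (a + 1) (min (a + k) b - a)) i)
      (hplay : Play p k (bump p D i a) (a + 1) b F) :
      Play p k D a b F

/-- Maximum load of a load vector. -/
noncomputable def maxLoad {m : ℕ} (D : Fin m → ℝ) : ℝ := ⨆ i, D i

/-- `ΔL([a:b])`: the maximum possible increase of the makespan caused by the block
`[a:b]` of jobs, over all nonnegative initial loads and all `k`-lookahead plays. -/
noncomputable def deltaL {m : ℕ} (p : Fin m → ℕ → ℝ) (k a b : ℕ) : ℝ :=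
  sSup {x | ∃ D F : Fin m → ℝ,
    (∀ i, 0 ≤ D i) ∧ Play p k D a b F ∧ x = maxLoad F - maxLoad D}

/-- Minimum processing time of job `j`. -/
noncomputable def pmin {m : ℕ} (p : Fin m → ℕ → ℝ) (j : ℕ) : ℝ := ⨅ i, p i j

/-- Makespan of an arbitrary schedule `τ` of jobs `1, …, n` on `m` machines. -/
noncomputable def makespanM {m : ℕ} (n : ℕ) (p : Fin m → ℕ → ℝ) (τ : ℕ → Fin m) : ℝ :=
  ⨆ i, ∑ j ∈ Finset.Icc 1 n, if τ j = i then p i j else 0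

/-- Optimal (minimum) makespan over all schedules of jobs `1, …, n`. -/
noncomputable def OPTm {m : ℕ} (n : ℕ) (p : Fin m → ℕ → ℝ) : ℝ :=
  sInf {x | ∃ τ : ℕ → Fin m, x = makespanM n p τ}


section aux
variable {m : ℕ} (p : Fin m → ℕ → ℝ)

lemma le_maxLoad (D : Fin m → ℝ) (i : Fin m) : D i ≤ maxLoad D :=
  le_ciSup (Set.finite_range D).bddAbove i

lemma maxLoad_le [Nonempty (Fin m)] {D : Fin m → ℝ} {c : ℝ} (h : ∀ i, D i ≤ c) :
    maxLoad D ≤ c := ciSup_le h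

lemma pmin_le [Nonempty (Fin m)] (j : ℕ) (i : Fin m) : pmin p j ≤ p i j :=
  ciInf_le (Set.finite_range _).bddBelow i

lemma pmin_nonneg [Nonempty (Fin m)] (hp : ∀ i j, 0 ≤ p i j) (j : ℕ) : 0 ≤ pmin p j :=
  le_ciInf fun i => hp i j

lemma out_mono (hp : ∀ i j, 0 ≤ p i j) {D : Fin m → ℝ} {js : List ℕ} {G : Fin m → ℝ}
    (h : Out p D js G) : ∀ i', D i' ≤ G i' := by
  induction h with
  | nil D => intro i'; exact le_refl _
  | cons D j js i cont hcont hopt ih =>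
      intro i'
      calc D i' ≤ bump p D i j i' := by
            simp only [bump]
            have : (0:ℝ) ≤ if i' = i then p i j else 0 := by split_ifs with h; exacts [hp i j, le_refl 0]
            linarith
        _ ≤ cont i i' := ih i i'
end aux

section outb
variable {m : ℕ} {p : Fin m → ℕ → ℝ}

lemma bump_nonneg (hp : ∀ i j, 0 ≤ p i j) {D : Fin m → ℝ} (hD : ∀ i, 0 ≤ D i)
    (i : Fin m) (j : ℕ) : ∀ i', 0 ≤ bump p D i j i' := by
  intro i'
  simp only [bump]
  have : (0:ℝ) ≤ if i' = i then p i j else 0 := by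
    split_ifs with h; exacts [hp i j, le_refl 0]
  have := hD i'
  linarith

lemma maxLoad_bump_le (hp : ∀ i j, 0 ≤ p i j) [Nonempty (Fin m)] (D : Fin m → ℝ)
    (i : Fin m) (j : ℕ) {c : ℝ} (hM : maxLoad D ≤ c) (hc : D i + p i j ≤ c) :
    maxLoad (bump p D i j) ≤ c := by
  apply maxLoad_le
  intro i'
  by_cases h : i' = i
  · subst h; simp only [bump, if_pos rfl]; exact hc
  · simp only [bump, if_neg h, add_zero]
    exact (le_maxLoad D i').trans hM

/-- Key lemma: bound on the final load of any machine after a backward-induction play. -/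
lemma outBound (hp : ∀ i j, 0 ≤ p i j) (W : List ℕ → ℝ) (hW0 : ∀ l, 0 ≤ W l)
    {D : Fin m → ℝ} {js : List ℕ} {G : Fin m → ℝ} (h : Out p D js G) :
    (∀ i, 0 ≤ D i) → (∀ j ∈ js, ∀ t, pmin p j + 2 * W t ≤ W (j :: t)) →
    ∀ i0, G i0 ≤ max (D i0) (maxLoad D + W js) := by
  induction h with
  | nil D => intro _ _ i0; exact le_max_left _ _
  | cons D j js i cont hcont hopt ih =>
      intro hD hW i0
      haveI : Nonempty (Fin m) := ⟨i⟩
      -- the pmin-machine for job j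
      obtain ⟨ih', hih'⟩ := Finite.exists_min (fun i' => p i' j)
      have hpm : p ih' j = pmin p j :=
        le_antisymm (le_ciInf hih') (pmin_le p j ih')
      set M := maxLoad D with hM
      have hWt : 0 ≤ W js := hW0 js
      have hpj : 0 ≤ pmin p j := pmin_nonneg p hp j
      -- bound on the payoff of job j via deviating to ih'
      have hpay' : cont ih' ih' ≤ M + pmin p j + W js := by
        have h1 := ih ih' (bump_nonneg hp hD ih' j)
          (fun j' hj' t => hW j' (List.mem_cons_of_mem _ hj') t) ih'
        have e : bump p D ih' j ih' = D ih' + p ih' j := by simp [bump]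
        have hml := le_maxLoad D ih'
        have h2 : bump p D ih' j ih' ≤ M + pmin p j := by
          rw [e]; linarith [hpm.ge, hpm.le]
        have h3 : maxLoad (bump p D ih' j) ≤ M + pmin p j :=
          maxLoad_bump_le hp D ih' j (by linarith) (by rw [← e]; exact h2)
        rcases le_max_iff.mp h1 with h' | h'
        · exact (h'.trans h2).trans (by linarith)
        · exact h'.trans (by linarith)
      have hpay : cont i i ≤ M + pmin p j + W js := (hopt ih').trans hpay'
      -- actual move
      have hbi : bump p D i j i ≤ M + pmin p j + W js :=
        (out_mono p hp (hcont i) i).trans hpay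
      have hmb : maxLoad (bump p D i j) ≤ M + pmin p j + W js :=
        maxLoad_bump_le hp D i j (by linarith) (by simpa [bump] using hbi)
      have h1 := ih i (bump_nonneg hp hD i j)
        (fun j' hj' t => hW j' (List.mem_cons_of_mem _ hj') t) i0
      have hb0 : bump p D i j i0 ≤ max (D i0) (M + pmin p j + W js) := by
        by_cases h : i0 = i
        · subst h; exact le_max_of_le_right hbi
        · simp only [bump, if_neg h, add_zero]; exact le_max_left _ _
      have hkey : pmin p j + 2 * W js ≤ W (j :: js) := hW j List.mem_cons_self js
      rcases le_max_iff.mp h1 with h' | h'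
      · rcases le_max_iff.mp (h'.trans hb0) with h'' | h''
        · exact le_max_of_le_left h''
        · exact le_max_of_le_right (by linarith)
      · exact le_max_of_le_right (by linarith)
end outb

section playb
variable {m : ℕ} {p : Fin m → ℕ → ℝ}

lemma playBound (hp : ∀ i j, 0 ≤ p i j) {k : ℕ} (W : List ℕ → ℝ) (hW0 : ∀ l, 0 ≤ W l)
    {D : Fin m → ℝ} {a b : ℕ} {F : Fin m → ℝ} (h : Play p k D a b F) :
    (∀ i, 0 ≤ D i) → (∀ j, a < j → j ≤ b → ∀ t, pmin p j + 2 * W t ≤ W (j :: t)) →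
    maxLoad F ≤ maxLoad D +
      ∑ j ∈ Finset.Icc a b, (pmin p j + W (List.range' (j + 1) (min (j + k) b - j))) := by
  induction h with
  | nil D a b h =>
      intro _ _
      rw [Finset.Icc_eq_empty (by omega), Finset.sum_empty, add_zero]
  | cons D a b i F hab hroot hplay ih =>
      intro hD hW
      haveI : Nonempty (Fin m) := ⟨i⟩
      obtain ⟨cont, hcont, hopt⟩ := hroot
      set js := List.range' (a + 1) (min (a + k) b - a) with hjs
      have hmemjs : ∀ j ∈ js, a < j ∧ j ≤ b := by
        intro j hj
        rw [hjs, List.mem_range'_1] at hj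
        omega
      have hWjs : ∀ j ∈ js, ∀ t, pmin p j + 2 * W t ≤ W (j :: t) := fun j hj t =>
        hW j (hmemjs j hj).1 (hmemjs j hj).2 t
      -- pmin machine of job a
      obtain ⟨ia, hia⟩ := Finite.exists_min (fun i' => p i' a)
      have hpm : p ia a = pmin p a := le_antisymm (le_ciInf hia) (pmin_le p a ia)
      set M := maxLoad D with hM
      have hWt : 0 ≤ W js := hW0 js
      have hpj : 0 ≤ pmin p a := pmin_nonneg p hp a
      have hpay' : cont ia ia ≤ M + pmin p a + W js := by
        have h1 := outBound hp W hW0 (hcont ia) (bump_nonneg hp hD ia a) hWjs ia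
        have e : bump p D ia a ia = D ia + p ia a := by simp [bump]
        have hml := le_maxLoad D ia
        have h2 : bump p D ia a ia ≤ M + pmin p a := by
          rw [e]; linarith [hpm.le]
        have h3 : maxLoad (bump p D ia a) ≤ M + pmin p a :=
          maxLoad_bump_le hp D ia a (by linarith) (by rw [← e]; exact h2)
        rcases le_max_iff.mp h1 with h' | h'
        · exact (h'.trans h2).trans (by linarith)
        · exact h'.trans (by linarith)
      have hpay : cont i i ≤ M + pmin p a + W js := (hopt ia).trans hpay'
      have hbi : bump p D i a i ≤ M + pmin p a + W js :=
        (out_mono p hp (hcont i) i).trans hpay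
      have hmb : maxLoad (bump p D i a) ≤ M + pmin p a + W js :=
        maxLoad_bump_le hp D i a (by linarith) (by simpa [bump] using hbi)
      have ih' := ih (bump_nonneg hp hD i a)
        (fun j h1 h2 t => hW j (by omega) h2 t)
      have hsum : ∑ j ∈ Finset.Icc a b,
            (pmin p j + W (List.range' (j + 1) (min (j + k) b - j)))
          = (pmin p a + W js) + ∑ j ∈ Finset.Icc (a + 1) b,
            (pmin p j + W (List.range' (j + 1) (min (j + k) b - j))) := by
        have hins : Finset.Icc a b = insert a (Finset.Icc (a + 1) b) := by
          ext x; simp only [Finset.mem_Icc, Finset.mem_insert]; omega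
        rw [hins, Finset.sum_insert (by simp)]
      rw [hsum]
      calc maxLoad F ≤ maxLoad (bump p D i a) + _ := ih'
        _ ≤ _ := by linarith
end playb

section optf
variable {m : ℕ} {p : Fin m → ℕ → ℝ} {n : ℕ}

lemma le_OPTm [Nonempty (Fin m)] {c : ℝ} (h : ∀ τ : ℕ → Fin m, c ≤ makespanM n p τ) :
    c ≤ OPTm n p := by
  have hne : Set.Nonempty {x | ∃ τ : ℕ → Fin m, x = makespanM n p τ} :=
    ⟨makespanM n p (fun _ => Classical.arbitrary _), fun _ => Classical.arbitrary _, rfl⟩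
  apply le_csInf hne
  rintro x ⟨τ, rfl⟩
  exact h τ

lemma makespan_nonneg [Nonempty (Fin m)] (hp : ∀ i j, 0 ≤ p i j) (τ : ℕ → Fin m) :
    0 ≤ makespanM n p τ := by
  obtain ⟨i0⟩ : Nonempty (Fin m) := inferInstance
  have h0 : (0:ℝ) ≤ ∑ j ∈ Finset.Icc 1 n, if τ j = i0 then p i0 j else 0 := by
    apply Finset.sum_nonneg
    intro j _
    split_ifs; exacts [hp i0 j, le_refl 0]
  exact h0.trans (le_ciSup
    (Set.finite_range (fun i => ∑ j ∈ Finset.Icc 1 n, if τ j = i then p i j else 0)).bddAbove i0)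

lemma OPT_nonneg [Nonempty (Fin m)] (hp : ∀ i j, 0 ≤ p i j) : 0 ≤ OPTm n p := by
  exact le_OPTm fun τ => makespan_nonneg hp τ

lemma pmin_le_makespan [Nonempty (Fin m)] (hp : ∀ i j, 0 ≤ p i j) (τ : ℕ → Fin m)
    {j : ℕ} (hj : j ∈ Finset.Icc 1 n) : pmin p j ≤ makespanM n p τ := by
  have h1 : pmin p j ≤ p (τ j) j := pmin_le p j (τ j)
  have h2 : p (τ j) j ≤ ∑ j' ∈ Finset.Icc 1 n, if τ j' = τ j then p (τ j) j' else 0 := by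
    have := Finset.single_le_sum (f := fun j' => if τ j' = τ j then p (τ j) j' else 0)
      (fun j' _ => by split_ifs; exacts [hp _ _, le_refl 0]) hj
    simpa using this
  exact (h1.trans h2).trans (le_ciSup
    (Set.finite_range (fun i => ∑ j' ∈ Finset.Icc 1 n, if τ j' = i then p i j' else 0)).bddAbove
    (τ j))

lemma pmin_le_OPT [Nonempty (Fin m)] (hp : ∀ i j, 0 ≤ p i j)
    {j : ℕ} (hj : j ∈ Finset.Icc 1 n) : pmin p j ≤ OPTm n p := by
  exact le_OPTm fun τ => pmin_le_makespan hp τ hj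

lemma sum_pmin_le [Nonempty (Fin m)] (hp : ∀ i j, 0 ≤ p i j) (hm : 0 < m) :
    ∑ j ∈ Finset.Icc 1 n, pmin p j ≤ m * OPTm n p := by
  have key : ∀ τ : ℕ → Fin m, ∑ j ∈ Finset.Icc 1 n, pmin p j ≤ m * makespanM n p τ := by
    intro τ
    have h1 : ∑ j ∈ Finset.Icc 1 n, pmin p j ≤ ∑ j ∈ Finset.Icc 1 n, p (τ j) j :=
      Finset.sum_le_sum fun j _ => pmin_le p j (τ j)
    have h2 : ∑ j ∈ Finset.Icc 1 n, p (τ j) j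
        = ∑ i : Fin m, ∑ j ∈ Finset.Icc 1 n, (if τ j = i then p i j else 0) := by
      rw [Finset.sum_comm]
      apply Finset.sum_congr rfl
      intro j _
      rw [Finset.sum_ite_eq Finset.univ (τ j) (fun i => p i j)]
      simp
    have h3 : ∑ i : Fin m, ∑ j ∈ Finset.Icc 1 n, (if τ j = i then p i j else 0)
        ≤ ∑ _i : Fin m, makespanM n p τ := by
      apply Finset.sum_le_sum
      intro i _
      exact le_ciSup
        (Set.finite_range (fun i => ∑ j ∈ Finset.Icc 1 n, if τ j = i then p i j else 0)).bddAbove i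
    rw [Finset.sum_const, Finset.card_univ, Fintype.card_fin, nsmul_eq_mul] at h3
    linarith
  have hmpos : (0:ℝ) < m := by exact_mod_cast hm
  have : (∑ j ∈ Finset.Icc 1 n, pmin p j) / m ≤ OPTm n p := by
    apply le_OPTm
    intro τ
    rw [div_le_iff₀ hmpos]
    calc ∑ j ∈ Finset.Icc 1 n, pmin p j ≤ m * makespanM n p τ := key τ
      _ = makespanM n p τ * m := mul_comm _ _
  calc ∑ j ∈ Finset.Icc 1 n, pmin p j
      = (∑ j ∈ Finset.Icc 1 n, pmin p j) / m * m := by field_simp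
    _ ≤ OPTm n p * m := by
        apply mul_le_mul_of_nonneg_right this hmpos.le
    _ = m * OPTm n p := mul_comm _ _
end optf

section sums
lemma sum_map_range' (f : ℕ → ℝ) (c s : ℕ) :
    ((List.range' s c).map f).sum = ∑ i ∈ Finset.range c, f (s + i) := by
  induction c generalizing s with
  | zero => simp
  | succ c ih =>
      rw [List.range'_succ, List.map_cons, List.sum_cons, ih (s + 1),
        Finset.sum_range_succ']
      simp only [add_zero]
      rw [add_comm]
      congr 1
      apply Finset.sum_congr rfl
      intro i _
      congr 1
      omega

variable {m : ℕ} {p : Fin m → ℕ → ℝ}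

lemma window_sum_le [Nonempty (Fin m)] (hp : ∀ i j, 0 ≤ p i j) (k n : ℕ) :
    ∑ j ∈ Finset.Icc 1 n,
        ((List.range' (j + 1) (min (j + k) n - j)).map (pmin p)).sum
      ≤ k * ∑ j ∈ Finset.Icc 1 n, pmin p j := by
  have hpm : ∀ j, 0 ≤ pmin p j := pmin_nonneg p hp
  have step1 : ∀ j ∈ Finset.Icc 1 n,
      ((List.range' (j + 1) (min (j + k) n - j)).map (pmin p)).sum
        ≤ ∑ c ∈ Finset.range k, (if j + 1 + c ≤ n then pmin p (j + 1 + c) else 0) := by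
    intro j _
    rw [sum_map_range']
    have hsub : Finset.range (min (j + k) n - j) ⊆ Finset.range k := by
      apply Finset.range_subset_range.mpr; omega
    calc ∑ c ∈ Finset.range (min (j + k) n - j), pmin p (j + 1 + c)
        = ∑ c ∈ Finset.range (min (j + k) n - j),
            (if j + 1 + c ≤ n then pmin p (j + 1 + c) else 0) := by
          apply Finset.sum_congr rfl
          intro c hc
          rw [Finset.mem_range] at hc
          rw [if_pos (by omega)]
      _ ≤ ∑ c ∈ Finset.range k, (if j + 1 + c ≤ n then pmin p (j + 1 + c) else 0) := by
          apply Finset.sum_le_sum_of_subset_of_nonneg hsub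
          intro c _ _
          split_ifs; exacts [hpm _, le_refl 0]
  calc ∑ j ∈ Finset.Icc 1 n,
        ((List.range' (j + 1) (min (j + k) n - j)).map (pmin p)).sum
      ≤ ∑ j ∈ Finset.Icc 1 n, ∑ c ∈ Finset.range k,
          (if j + 1 + c ≤ n then pmin p (j + 1 + c) else 0) :=
        Finset.sum_le_sum step1
    _ = ∑ c ∈ Finset.range k, ∑ j ∈ Finset.Icc 1 n,
          (if j + 1 + c ≤ n then pmin p (j + 1 + c) else 0) := Finset.sum_comm
    _ ≤ ∑ _c ∈ Finset.range k, ∑ j ∈ Finset.Icc 1 n, pmin p j := by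
        apply Finset.sum_le_sum
        intro c _
        rw [← Finset.sum_filter]
        have himg := Finset.sum_image (s := Finset.filter (fun a => a + 1 + c ≤ n)
            (Finset.Icc 1 n)) (f := pmin p) (g := fun j => j + 1 + c)
            (by intro x _ y _ h; dsimp only at h; omega)
        rw [← himg]
        apply Finset.sum_le_sum_of_subset_of_nonneg
        · intro x hx
          simp only [Finset.mem_image, Finset.mem_filter, Finset.mem_Icc] at hx ⊢
          obtain ⟨j, ⟨⟨h1, h2⟩, h3⟩, rfl⟩ := hx
          omega
        · intro x _ _; exact hpm x
    _ = k * ∑ j ∈ Finset.Icc 1 n, pmin p j := by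
        rw [Finset.sum_const, Finset.card_range, nsmul_eq_mul]
end sums
/-- On `m` unrelated machines with `k`-lookahead players (`k ≥ 1`),
every `k`-lookahead play of all `n` jobs from zero initial loads has makespan at most
`(m + n·2^k) · OPT`; combined with the bound `(m·k·2^k + m) · OPT`, the sequential
price of anarchy is `O(2^k · min {mk, n})`. -/
theorem spoa_kLookahead_m_machines_min (m k n : ℕ) (hm : 0 < m) (hk : 1 ≤ k)
    (p : Fin m → ℕ → ℝ) (hp : ∀ i j, 0 ≤ p i j)
    (F : Fin m → ℝ) (hF : Play p k (fun _ => 0) 1 n F) :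
    maxLoad F ≤ ((m : ℝ) + n * 2 ^ k) * OPTm n p ∧
      maxLoad F ≤ ((m : ℝ) * k * 2 ^ k + m) * OPTm n p := by
  haveI : Nonempty (Fin m) := Fin.pos_iff_nonempty.mp hm
  set OPT := OPTm n p with hOPT
  have hO : 0 ≤ OPT := OPT_nonneg hp
  have hD0 : ∀ i : Fin m, (0:ℝ) ≤ (fun _ : Fin m => (0:ℝ)) i := fun _ => le_refl 0
  have hML0 : maxLoad (fun _ : Fin m => (0:ℝ)) = 0 := ciSup_const
  have hpm : ∀ j, 0 ≤ pmin p j := pmin_nonneg p hp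
  have hpmO : ∀ j, 1 ≤ j → j ≤ n → pmin p j ≤ OPT := fun j h1 h2 =>
    pmin_le_OPT hp (Finset.mem_Icc.mpr ⟨h1, h2⟩)
  have hlen : ∀ j : ℕ, (min (j + k) n - j) ≤ k := fun j => by omega
  have hpow : ∀ c : ℕ, c ≤ k → (2:ℝ) ^ c ≤ 2 ^ k := fun c hc =>
    pow_le_pow_right₀ (by norm_num) hc
  have hpow1 : ∀ c : ℕ, (1:ℝ) ≤ 2 ^ c := fun c => one_le_pow₀ (by norm_num)
  constructor
  · -- first bound: W l = (2^|l| - 1) * OPT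
    set W : List ℕ → ℝ := fun l => ((2:ℝ) ^ l.length - 1) * OPT with hW
    have hW0 : ∀ l, 0 ≤ W l := fun l => mul_nonneg (by linarith [hpow1 l.length]) hO
    have hWc : ∀ j, 1 < j → j ≤ n → ∀ t, pmin p j + 2 * W t ≤ W (j :: t) := by
      intro j h1 h2 t
      have hpj : pmin p j ≤ OPT := hpmO j (by omega) h2
      simp only [hW, List.length_cons]
      have : (2:ℝ) ^ (t.length + 1) = 2 * 2 ^ t.length := by ring
      rw [this]
      ring_nf
      nlinarith [hpow1 t.length]
    have hplay := playBound hp W hW0 hF hD0 hWc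
    rw [hML0, zero_add] at hplay
    have hterm : ∀ j ∈ Finset.Icc 1 n,
        pmin p j + W (List.range' (j + 1) (min (j + k) n - j)) ≤ 2 ^ k * OPT := by
      intro j hj
      rw [Finset.mem_Icc] at hj
      have h1 : pmin p j ≤ OPT := hpmO j hj.1 hj.2
      have h2 : W (List.range' (j + 1) (min (j + k) n - j)) ≤ ((2:ℝ) ^ k - 1) * OPT := by
        simp only [hW, List.length_range']
        apply mul_le_mul_of_nonneg_right _ hO
        have := hpow _ (hlen j)
        linarith
      linarith
    calc maxLoad F ≤ ∑ j ∈ Finset.Icc 1 n,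
          (pmin p j + W (List.range' (j + 1) (min (j + k) n - j))) := hplay
      _ ≤ ∑ _j ∈ Finset.Icc 1 n, (2:ℝ) ^ k * OPT := Finset.sum_le_sum hterm
      _ = n * 2 ^ k * OPT := by
          rw [Finset.sum_const, Nat.card_Icc, nsmul_eq_mul]
          push_cast
          ring
      _ ≤ ((m : ℝ) + n * 2 ^ k) * OPT := by
          have : (0:ℝ) ≤ (m:ℝ) := by positivity
          nlinarith
  · -- second bound: W l = (2^|l| - 1) * sum of pmin over l
    set W : List ℕ → ℝ := fun l => ((2:ℝ) ^ l.length - 1) * (l.map (pmin p)).sum with hW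
    have hsum0 : ∀ l : List ℕ, 0 ≤ (l.map (pmin p)).sum := by
      intro l
      apply List.sum_nonneg
      intro x hx
      obtain ⟨j, _, rfl⟩ := List.mem_map.mp hx
      exact hpm j
    have hW0 : ∀ l, 0 ≤ W l := fun l =>
      mul_nonneg (by linarith [hpow1 l.length]) (hsum0 l)
    have hWc : ∀ j, 1 < j → j ≤ n → ∀ t, pmin p j + 2 * W t ≤ W (j :: t) := by
      intro j _ _ t
      simp only [hW, List.length_cons, List.map_cons, List.sum_cons]
      have h2 : (2:ℝ) ^ (t.length + 1) = 2 * 2 ^ t.length := by ring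
      rw [h2]
      nlinarith [hpow1 t.length, hpm j, hsum0 t]
    have hplay := playBound hp W hW0 hF hD0 hWc
    rw [hML0, zero_add] at hplay
    set S := ∑ j ∈ Finset.Icc 1 n, pmin p j with hS
    have hSnn : 0 ≤ S := Finset.sum_nonneg fun j _ => hpm j
    have hSm : S ≤ m * OPT := sum_pmin_le hp hm
    have hterm : ∀ j ∈ Finset.Icc 1 n,
        pmin p j + W (List.range' (j + 1) (min (j + k) n - j))
          ≤ pmin p j + 2 ^ k *
            ((List.range' (j + 1) (min (j + k) n - j)).map (pmin p)).sum := by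
      intro j _
      have h2 : W (List.range' (j + 1) (min (j + k) n - j))
          ≤ 2 ^ k * ((List.range' (j + 1) (min (j + k) n - j)).map (pmin p)).sum := by
        simp only [hW, List.length_range']
        apply mul_le_mul_of_nonneg_right _ (hsum0 _)
        have := hpow _ (hlen j)
        linarith
      linarith
    have hwin := window_sum_le hp k n
    calc maxLoad F ≤ ∑ j ∈ Finset.Icc 1 n,
          (pmin p j + W (List.range' (j + 1) (min (j + k) n - j))) := hplay
      _ ≤ ∑ j ∈ Finset.Icc 1 n, (pmin p j + 2 ^ k *
            ((List.range' (j + 1) (min (j + k) n - j)).map (pmin p)).sum) :=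
          Finset.sum_le_sum hterm
      _ = S + 2 ^ k * ∑ j ∈ Finset.Icc 1 n,
            ((List.range' (j + 1) (min (j + k) n - j)).map (pmin p)).sum := by
          rw [Finset.sum_add_distrib, ← Finset.mul_sum]
      _ ≤ S + 2 ^ k * (k * S) := by
          have h2k : (0:ℝ) ≤ 2 ^ k := by positivity
          nlinarith
      _ ≤ ((m : ℝ) * k * 2 ^ k + m) * OPT := by
          have h1 : (k:ℝ) * 2 ^ k * S ≤ (k:ℝ) * 2 ^ k * ((m:ℝ) * OPT) :=
            mul_le_mul_of_nonneg_left hSm (by positivity)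
          nlinarith
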